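/- The algebraic degree of the n-th iterate of a Hénon type map f of algebraic degree d equals dⁿ for every n ≥ 0. -/

import Mathlib

open MvPolynomial

/-- The Hénon map `h(z₁,z₂) = (p(z₁) + a z₂, z₁)`. -/
noncomputable def henon (p : Polynomial ℂ) (a : ℂ) : ℂ × ℂ → ℂ × ℂ :=
  fun z => (p.eval z.1 + a * z.2, z.1)

/-- The Hénon type map `f = h₁ ∘ ⋯ ∘ hₘ`, a composition of Hénon maps. -/
noncomputable def henonComp {m : ℕ} (p : Fin m → Polynomial ℂ) (a : Fin m → ℂ) :
    ℂ × ℂ → ℂ × ℂ :=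
  (List.ofFn fun i => henon (p i) (a i)).foldr (· ∘ ·) id

lemma eval_polyAeval (v : Fin 2 → ℂ) (P : MvPolynomial (Fin 2) ℂ) (q : Polynomial ℂ) :
    eval v (Polynomial.aeval P q) = q.eval (eval v P) := by
  have h := Polynomial.aeval_algHom_apply
    (MvPolynomial.aeval v : MvPolynomial (Fin 2) ℂ →ₐ[ℂ] ℂ) P q
  have h1 : (MvPolynomial.aeval v : MvPolynomial (Fin 2) ℂ →ₐ[ℂ] ℂ) P = eval v P := rfl
  have h2 : (MvPolynomial.aeval v : MvPolynomial (Fin 2) ℂ →ₐ[ℂ] ℂ) (Polynomial.aeval P q)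
      = eval v (Polynomial.aeval P q) := rfl
  rw [h1, h2] at h
  rw [← h, ← Polynomial.coe_aeval_eq_eval]

lemma totalDegree_polyAeval_le (P : MvPolynomial (Fin 2) ℂ) (q : Polynomial ℂ) :
    (Polynomial.aeval P q).totalDegree ≤ q.natDegree * P.totalDegree := by
  rw [Polynomial.aeval_eq_sum_range]
  refine totalDegree_finsetSum_le fun i hi => ?_
  refine (totalDegree_smul_le _ _).trans ?_
  refine (totalDegree_pow _ _).trans ?_
  exact Nat.mul_le_mul_right _ (Nat.lt_succ_iff.mp (Finset.mem_range.mp hi))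

/-- Restriction of a bivariate polynomial to the line `z₂ = 0`. -/
noncomputable def restr (P : MvPolynomial (Fin 2) ℂ) : Polynomial ℂ :=
  MvPolynomial.aeval ![Polynomial.X, 0] P

lemma eval_restr (P : MvPolynomial (Fin 2) ℂ) (t : ℂ) :
    (restr P).eval t = eval ![t, 0] P := by
  have h := comp_aeval_apply (Polynomial.aeval t : Polynomial ℂ →ₐ[ℂ] ℂ)
    (f := ![Polynomial.X, 0]) P
  have h2 : (fun i => (Polynomial.aeval t : Polynomial ℂ →ₐ[ℂ] ℂ) (![Polynomial.X, 0] i))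
      = ![t, 0] := by
    funext i
    fin_cases i <;> simp
  rw [restr, ← Polynomial.coe_aeval_eq_eval, h, h2]
  rfl

lemma natDegree_restr_le (P : MvPolynomial (Fin 2) ℂ) :
    (restr P).natDegree ≤ P.totalDegree := by
  conv_lhs => rw [restr, P.as_sum, map_sum]
  refine Polynomial.natDegree_sum_le_of_forall_le _ _ fun s hs => ?_
  rw [aeval_monomial]
  refine (Polynomial.natDegree_mul_le).trans ?_
  refine le_trans ?_ (le_totalDegree hs)
  have hC : ((algebraMap ℂ (Polynomial ℂ)) (coeff s P)).natDegree = 0 := by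
    simp [Polynomial.algebraMap_eq]
  rw [hC, zero_add, Finsupp.prod, Finsupp.sum]
  refine (Polynomial.natDegree_prod_le _ _).trans (Finset.sum_le_sum fun i _ => ?_)
  refine (Polynomial.natDegree_pow_le).trans ?_
  have h1 : (![Polynomial.X, (0 : Polynomial ℂ)] i).natDegree ≤ 1 := by
    fin_cases i <;> simp
  calc s i * (![Polynomial.X, (0 : Polynomial ℂ)] i).natDegree
      ≤ s i * 1 := Nat.mul_le_mul_left _ h1
  _ = s i := mul_one _

def Good (F : ℂ × ℂ → ℂ × ℂ) (D : ℕ) : Prop :=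
  ∃ (P Q : MvPolynomial (Fin 2) ℂ) (u v : Polynomial ℂ),
    (∀ z : ℂ × ℂ, F z = (eval ![z.1, z.2] P, eval ![z.1, z.2] Q)) ∧
    P.totalDegree ≤ D ∧ Q.totalDegree ≤ D ∧
    (∀ t : ℂ, F (t, 0) = (u.eval t, v.eval t)) ∧
    u.natDegree = D ∧ v.natDegree < D

lemma good_id : Good id 1 := by
  refine ⟨X 0, X 1, Polynomial.X, 0, fun z => ?_, ?_, ?_, fun t => ?_, ?_, ?_⟩
  · simp
  · simp [totalDegree_X]
  · simp [totalDegree_X]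
  · simp
  · simp
  · simp

lemma good_henon (q : Polynomial ℂ) (b : ℂ) (hq : 2 ≤ q.natDegree)
    {F : ℂ × ℂ → ℂ × ℂ} {D : ℕ} (h : Good F D) : Good (henon q b ∘ F) (q.natDegree * D) := by
  obtain ⟨P, Q, u, v, hFz, hP, hQ, hFt, hu, hv⟩ := h
  have hD1 : 1 ≤ D := by omega
  have hDle : D ≤ q.natDegree * D := Nat.le_mul_of_pos_left D (by omega)
  refine ⟨Polynomial.aeval P q + C b * Q, P, q.comp u + Polynomial.C b * v, u,
    fun z => ?_, ?_, hP.trans hDle, fun t => ?_, ?_, ?_⟩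
  · rw [Function.comp_apply, hFz z, henon]
    simp [eval_polyAeval]
  · refine (totalDegree_add _ _).trans (max_le ?_ ?_)
    · exact (totalDegree_polyAeval_le P q).trans (Nat.mul_le_mul_left _ hP)
    · refine (totalDegree_mul _ _).trans ?_
      simpa [totalDegree_C] using hQ.trans hDle
  · rw [Function.comp_apply, hFt t, henon]
    simp [Polynomial.eval_comp]
  · have hcomp : (q.comp u).natDegree = q.natDegree * D := by
      rw [Polynomial.natDegree_comp, hu]
    have hlt : (Polynomial.C b * v).natDegree < (q.comp u).natDegree := by
      rw [hcomp]
      exact lt_of_le_of_lt (Polynomial.natDegree_C_mul_le _ _) (lt_of_lt_of_le hv hDle)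
    rw [Polynomial.natDegree_add_eq_left_of_natDegree_lt hlt, hcomp]
  · rw [hu]
    calc D = 1 * D := (one_mul D).symm
    _ < q.natDegree * D := Nat.mul_lt_mul_of_lt_of_le (by omega) le_rfl (by omega)

lemma good_list : ∀ (L : List (Polynomial ℂ × ℂ)), (∀ x ∈ L, 2 ≤ x.1.natDegree) →
    ∀ {F : ℂ × ℂ → ℂ × ℂ} {D : ℕ}, Good F D →
    Good (((L.map fun x => henon x.1 x.2).foldr (· ∘ ·) id) ∘ F)
      ((L.map fun x => x.1.natDegree).prod * D)
  | [], _, F, D, h => by simpa using h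
  | x :: L, hL, F, D, h => by
    have ih := good_list L (fun y hy => hL y (List.mem_cons_of_mem _ hy)) h
    rw [List.map_cons, List.foldr_cons, List.map_cons, List.prod_cons, mul_assoc,
      Function.comp_assoc]
    exact good_henon x.1 x.2 (hL x List.mem_cons_self) ih

lemma good_henonComp {m : ℕ} (p : Fin (m + 1) → Polynomial ℂ) (a : Fin (m + 1) → ℂ)
    (hdeg : ∀ i, 2 ≤ (p i).natDegree) {F : ℂ × ℂ → ℂ × ℂ} {D : ℕ} (h : Good F D) :
    Good (henonComp p a ∘ F) ((∏ i, (p i).natDegree) * D) := by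
  have key := good_list (List.ofFn fun i => (p i, a i)) (by
    intro x hx
    rw [List.mem_ofFn] at hx
    obtain ⟨i, hi⟩ := hx
    rw [← hi]
    exact hdeg i) h
  rw [List.map_ofFn, List.map_ofFn, List.prod_ofFn] at key
  simpa [henonComp, Function.comp_def] using key

/-- The algebraic degree of the `n`-th iterate of a Hénon type map `f` of algebraic
degree `d = ∏ deg pᵢ` equals `dⁿ` for every `n ≥ 0`: the iterate is a polynomial map
`(P, Q)` with `max (deg P) (deg Q) = dⁿ`. -/
theorem algebraic_degree_iterate (m : ℕ) (p : Fin (m + 1) → Polynomial ℂ)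
    (a : Fin (m + 1) → ℂ) (hdeg : ∀ i, 2 ≤ (p i).natDegree) (ha : ∀ i, a i ≠ 0) :
    ∀ n : ℕ, ∃ P Q : MvPolynomial (Fin 2) ℂ,
      (∀ z : ℂ × ℂ,
        (henonComp p a)^[n] z = (eval ![z.1, z.2] P, eval ![z.1, z.2] Q)) ∧
      max P.totalDegree Q.totalDegree = (∏ i, (p i).natDegree) ^ n := by
  have key : ∀ n : ℕ, Good ((henonComp p a)^[n]) ((∏ i, (p i).natDegree) ^ n) := by
    intro n
    induction n with
    | zero => simpa using good_id
    | succ n ih =>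
      have step := good_henonComp p a hdeg ih
      rw [← Function.iterate_succ'] at step
      rwa [pow_succ']
  intro n
  obtain ⟨P, Q, u, v, hFz, hP, hQ, hFt, hu, hv⟩ := key n
  refine ⟨P, Q, hFz, ?_⟩
  refine le_antisymm (max_le hP hQ) ?_
  have hPu : restr P = u := by
    refine Polynomial.funext fun t => ?_
    rw [eval_restr]
    have h := hFz (t, 0)
    rw [hFt t] at h
    exact (congrArg Prod.fst h).symm
  calc (∏ i, (p i).natDegree) ^ n = u.natDegree := hu.symm
  _ = (restr P).natDegree := by rw [hPu]
  _ ≤ P.totalDegree := natDegree_restr_le P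
  _ ≤ max P.totalDegree Q.totalDegree := le_max_left _ _
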